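/- Every sharply orthocomplete Archimedean atomic lattice effect algebra is a complete lattice effect algebra. -/

import Mathlib

universe u v

/-- An effect algebra: a partial algebra `(E; ⊕, 0, 1)` with `0 ≠ 1`, where `⊕` is
partially defined (domain `D`), commutative and associative where defined, every
element has a unique orthosupplement (`compl`, skolemizing axiom (Eiii)), and
`1 ⊕ x` defined implies `x = 0`. -/
structure EffectAlgebra (E : Type u) where
  D : E → E → Prop
  oplus : E → E → E
  zero : E
  one : E
  zero_ne_one : zero ≠ one
  D_comm : ∀ x y, D x y → D y x
  oplus_comm : ∀ x y, D x y → oplus x y = oplus y x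
  assoc : ∀ x y z, D x y → D (oplus x y) z →
      D y z ∧ D x (oplus y z) ∧ oplus (oplus x y) z = oplus x (oplus y z)
  assoc' : ∀ x y z, D y z → D x (oplus y z) →
      D x y ∧ D (oplus x y) z ∧ oplus (oplus x y) z = oplus x (oplus y z)
  compl : E → E
  D_compl : ∀ x, D x (compl x)
  oplus_compl : ∀ x, oplus x (compl x) = one
  compl_unique : ∀ x y, D x y → oplus x y = one → y = compl x
  one_max : ∀ x, D one x → x = zero

namespace EffectAlgebra

variable {E : Type u} (A : EffectAlgebra E)

/-- The induced order: `x ≤ y` iff `x ⊕ z = y` for some `z`. -/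
def le (x y : E) : Prop := ∃ z, A.D x z ∧ A.oplus x z = y

def IsLB (S : Set E) (m : E) : Prop := ∀ x ∈ S, A.le m x
def IsUB (S : Set E) (m : E) : Prop := ∀ x ∈ S, A.le x m

/-- `m` is the infimum of `S` computed within the subposet `P`. -/
def IsInfIn (P : Set E) (S : Set E) (m : E) : Prop :=
  m ∈ P ∧ A.IsLB S m ∧ ∀ z ∈ P, A.IsLB S z → A.le z m

/-- `m` is the supremum of `S` computed within the subposet `P`. -/
def IsSupIn (P : Set E) (S : Set E) (m : E) : Prop :=
  m ∈ P ∧ A.IsUB S m ∧ ∀ z ∈ P, A.IsUB S z → A.le m z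

/-- `w` is sharp iff the meet `w ∧ w'` exists in `E` and equals `0`. -/
def Sharp (w : E) : Prop := A.IsInfIn Set.univ {w, A.compl w} A.zero

/-- The set `S(E)` of sharp elements. -/
def sharpSet : Set E := {w | A.Sharp w}

def HasMeet (x y : E) : Prop := ∃ m, A.IsInfIn Set.univ {x, y} m
def HasJoin (x y : E) : Prop := ∃ j, A.IsSupIn Set.univ {x, y} j

/-- Every `x` has a least sharp element above it, which is the infimum of the sharp
elements above `x` both in `E` and in `S(E)`. -/
def SharplyDominating : Prop :=
  ∀ x : E, ∃ w, A.Sharp w ∧ A.le x w ∧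
    A.IsInfIn Set.univ {v | A.Sharp v ∧ A.le x v} w ∧
    A.IsInfIn A.sharpSet {v | A.Sharp v ∧ A.le x v} w

/-- Sharply dominating, and `x ∧ w` exists for every `x ∈ E`, `w ∈ S(E)`. -/
def SDominating : Prop :=
  A.SharplyDominating ∧ ∀ x w : E, A.Sharp w → A.HasMeet x w

end EffectAlgebra

/-- `SumDef A l s` : the orthosum of the finite list `l` is defined and equals `s`. -/
inductive EffectAlgebra.SumDef {E : Type u} (A : EffectAlgebra E) : List E → E → Prop
  | nil : EffectAlgebra.SumDef A [] A.zero
  | cons {x : E} {l : List E} {s : E} : EffectAlgebra.SumDef A l s → A.D x s →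
      EffectAlgebra.SumDef A (x :: l) (A.oplus x s)

namespace EffectAlgebra

variable {E : Type u} (A : EffectAlgebra E)

/-- A family is orthogonal iff every finite subfamily has a defined orthosum. -/
def Orthogonal {ι : Type v} (x : ι → E) : Prop :=
  ∀ l : List ι, l.Nodup → ∃ s, A.SumDef (l.map x) s

/-- The set of finite partial orthosums of a family. -/
def finiteSums {ι : Type v} (x : ι → E) : Set E :=
  {s | ∃ l : List ι, l.Nodup ∧ A.SumDef (l.map x) s}

/-- `v = ⊕ x` : the family is orthogonal and `v` is the supremum in `E` of all
finite partial orthosums. -/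
def HasOrthoSum {ι : Type v} (x : ι → E) (v : E) : Prop :=
  A.Orthogonal x ∧ A.IsSupIn Set.univ (A.finiteSums x) v

/-- Every family dominated elementwise by an orthogonal family of sharp
elements has an orthosum. -/
def SharplyOrthocomplete : Prop :=
  ∀ (ι : Type u) (x w : ι → E), (∀ k, A.Sharp (w k)) → A.Orthogonal w →
    (∀ k, A.le (x k) (w k)) → ∃ v, A.HasOrthoSum x v

/-- `c` is central: for every `y` the meets `y ∧ c`, `y ∧ c'` exist and
`y = (y ∧ c) ∨ (y ∧ c')`. -/
def Central (c : E) : Prop :=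
  ∀ y : E, ∃ m₁ m₂, A.IsInfIn Set.univ {y, c} m₁ ∧
    A.IsInfIn Set.univ {y, A.compl c} m₂ ∧ A.IsSupIn Set.univ {m₁, m₂} y

/-- The center `C(E)`. -/
def centerSet : Set E := {c | A.Central c}

def CentrallyDominating : Prop :=
  ∀ x : E, ∃ c, A.Central c ∧ A.le x c ∧
    A.IsInfIn Set.univ {d | A.Central d ∧ A.le x d} c ∧
    A.IsInfIn A.centerSet {d | A.Central d ∧ A.le x d} c

def CentrallyOrthocomplete : Prop :=
  ∀ (ι : Type u) (x c : ι → E), (∀ k, A.Central (c k)) → A.Orthogonal c →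
    (∀ k, A.le (x k) (c k)) → ∃ v, A.HasOrthoSum x v

/-- `P` is bifull in `E`: for `S ⊆ P`, the join of `S` in `P` exists iff the join
of `S` in `E` exists, and then they coincide. -/
def Bifull (P : Set E) : Prop :=
  ∀ S ⊆ P, (∀ s, A.IsSupIn P S s → A.IsSupIn Set.univ S s) ∧
    (∀ s, A.IsSupIn Set.univ S s → A.IsSupIn P S s)

/-- The subposet `P` is a complete lattice: every subset of `P` has a supremum
(and an infimum) computed within `P`. -/
def CompleteIn (P : Set E) : Prop :=
  ∀ S ⊆ P, (∃ s, A.IsSupIn P S s) ∧ (∃ m, A.IsInfIn P S m)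

/-- `E` is a complete lattice. -/
def Complete : Prop :=
  ∀ S : Set E, (∃ s, A.IsSupIn Set.univ S s) ∧ (∃ m, A.IsInfIn Set.univ S m)

/-- The induced order of `E` is a lattice. -/
def LatticeOrdered : Prop := ∀ x y : E, A.HasMeet x y ∧ A.HasJoin x y

/-- `x ↔ y` : `x ∨ y = x ⊕ (y ⊖ (x ∧ y))`. -/
def Compatible (x y : E) : Prop :=
  ∃ m j z, A.IsInfIn Set.univ {x, y} m ∧ A.IsSupIn Set.univ {x, y} j ∧
    A.D m z ∧ A.oplus m z = y ∧ A.D x z ∧ A.oplus x z = j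

/-- An MV-effect algebra: a lattice effect algebra all of whose pairs of elements
are compatible. -/
def MV : Prop := A.LatticeOrdered ∧ ∀ x y : E, A.Compatible x y

/-- `nx = x ⊕ ⋯ ⊕ x` (`n` times) is defined. -/
def nTimesDef (n : ℕ) (x : E) : Prop := ∃ s, A.SumDef (List.replicate n x) s

/-- `ord x < ∞` for every nonzero `x`. -/
def IsArchimedean : Prop := ∀ x : E, x ≠ A.zero → ∃ n : ℕ, ¬ A.nTimesDef n x

def Atom (a : E) : Prop := a ≠ A.zero ∧ ∀ b, A.le b a → b = A.zero ∨ b = a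

def Atomic : Prop := ∀ x : E, x ≠ A.zero → ∃ a, A.Atom a ∧ A.le a x

/-- The subposet `P` (closed under `'`) is an orthomodular lattice. -/
def OrthomodularIn (P : Set E) : Prop :=
  (∀ x ∈ P, ∀ y ∈ P, (∃ m, A.IsInfIn P {x, y} m) ∧ (∃ j, A.IsSupIn P {x, y} j)) ∧
  A.zero ∈ P ∧ A.one ∈ P ∧ (∀ x ∈ P, A.compl x ∈ P) ∧
  (∀ x ∈ P, A.IsInfIn P {x, A.compl x} A.zero ∧ A.IsSupIn P {x, A.compl x} A.one) ∧
  (∀ x ∈ P, ∀ y ∈ P, A.le x y →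
    ∃ m, A.IsInfIn P {y, A.compl x} m ∧ A.IsSupIn P {x, m} y)

def DistributiveIn (P : Set E) : Prop :=
  ∀ x ∈ P, ∀ y ∈ P, ∀ z ∈ P, ∀ jyz mxy mxz m : E,
    A.IsSupIn P {y, z} jyz → A.IsInfIn P {x, y} mxy → A.IsInfIn P {x, z} mxz →
    A.IsInfIn P {x, jyz} m → A.IsSupIn P {mxy, mxz} m

/-- The subposet `P` is a Boolean algebra (complemented distributive lattice with
bounds, complement given by `'`). -/
def BooleanIn (P : Set E) : Prop :=
  (∀ x ∈ P, ∀ y ∈ P, (∃ m, A.IsInfIn P {x, y} m) ∧ (∃ j, A.IsSupIn P {x, y} j)) ∧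
  A.zero ∈ P ∧ A.one ∈ P ∧ (∀ x ∈ P, A.compl x ∈ P) ∧
  (∀ x ∈ P, A.IsInfIn P {x, A.compl x} A.zero ∧ A.IsSupIn P {x, A.compl x} A.one) ∧
  A.DistributiveIn P

/-- A block: a maximal set of pairwise compatible elements. -/
def Block (M : Set E) : Prop :=
  (∀ x ∈ M, ∀ y ∈ M, A.Compatible x y) ∧
  ∀ N : Set E, M ⊆ N → (∀ x ∈ N, ∀ y ∈ N, A.Compatible x y) → N = M

def AtomIn (M : Set E) (a : E) : Prop :=
  a ∈ M ∧ a ≠ A.zero ∧ ∀ b ∈ M, A.le b a → b = A.zero ∨ b = a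

def AtomicIn (M : Set E) : Prop :=
  ∀ x ∈ M, x ≠ A.zero → ∃ a, A.AtomIn M a ∧ A.le a x

end EffectAlgebra

namespace EffectAlgebra

variable {E : Type u} (A : EffectAlgebra E)

lemma compl_one : A.compl A.one = A.zero :=
  A.one_max _ (A.D_compl A.one)

lemma D_one_zero : A.D A.one A.zero := by
  have h := A.D_compl A.one
  rwa [A.compl_one] at h

lemma oplus_one_zero : A.oplus A.one A.zero = A.one := by
  have h := A.oplus_compl A.one
  rwa [A.compl_one] at h

lemma compl_oplus_zero (x : E) :
    A.D (A.compl x) A.zero ∧ A.oplus (A.compl x) A.zero = A.compl x := by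
  have h2 : A.D (A.oplus x (A.compl x)) A.zero := by
    rw [A.oplus_compl]; exact A.D_one_zero
  obtain ⟨hD1, hD2, heq⟩ := A.assoc x (A.compl x) A.zero (A.D_compl x) h2
  have h3 : A.oplus x (A.oplus (A.compl x) A.zero) = A.one := by
    rw [← heq, A.oplus_compl, A.oplus_one_zero]
  have h4 := A.compl_unique x _ hD2 h3
  exact ⟨hD1, h4⟩

lemma compl_compl (x : E) : A.compl (A.compl x) = x := by
  have hD : A.D (A.compl x) x := A.D_comm _ _ (A.D_compl x)
  have he : A.oplus (A.compl x) x = A.one := by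
    rw [A.oplus_comm _ _ hD, A.oplus_compl]
  exact (A.compl_unique (A.compl x) x hD he).symm

lemma D_zero_right (x : E) : A.D x A.zero := by
  have h := (A.compl_oplus_zero (A.compl x)).1
  rwa [A.compl_compl] at h

lemma oplus_zero (x : E) : A.oplus x A.zero = x := by
  have h := (A.compl_oplus_zero (A.compl x)).2
  rwa [A.compl_compl] at h

lemma D_zero_left (x : E) : A.D A.zero x := A.D_comm _ _ (A.D_zero_right x)

lemma zero_oplus (x : E) : A.oplus A.zero x = x := by
  rw [← A.oplus_comm x A.zero (A.D_zero_right x), A.oplus_zero]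

lemma compl_zero : A.compl A.zero = A.one := by
  have := A.compl_compl A.one
  rw [A.compl_one] at this
  exact this

lemma le_refl (x : E) : A.le x x := ⟨A.zero, A.D_zero_right x, A.oplus_zero x⟩

lemma zero_le (x : E) : A.le A.zero x := ⟨x, A.D_zero_left x, A.zero_oplus x⟩

lemma le_one (x : E) : A.le x A.one := ⟨A.compl x, A.D_compl x, A.oplus_compl x⟩

lemma le_trans {x y z : E} (h1 : A.le x y) (h2 : A.le y z) : A.le x z := by
  obtain ⟨u, hu, rfl⟩ := h1
  obtain ⟨v, hv, rfl⟩ := h2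
  obtain ⟨hD1, hD2, heq⟩ := A.assoc x u v hu hv
  exact ⟨A.oplus u v, hD2, heq.symm⟩

/-- key helper : from `D a b`, `b ⊕ (a⊕b)' = a'`. -/
lemma oplus_compl_oplus {a b : E} (h : A.D a b) :
    A.D b (A.compl (A.oplus a b)) ∧
      A.oplus b (A.compl (A.oplus a b)) = A.compl a := by
  obtain ⟨hD1, hD2, heq⟩ := A.assoc a b (A.compl (A.oplus a b)) h (A.D_compl _)
  have h3 : A.oplus a (A.oplus b (A.compl (A.oplus a b))) = A.one := by
    rw [← heq, A.oplus_compl]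
  exact ⟨hD1, A.compl_unique a _ hD2 h3⟩

lemma D_le_compl {a b : E} (h : A.D a b) : A.le b (A.compl a) := by
  obtain ⟨hD, he⟩ := A.oplus_compl_oplus h
  exact ⟨_, hD, he⟩

lemma D_le_compl' {a b : E} (h : A.D a b) : A.le a (A.compl b) :=
  A.D_le_compl (A.D_comm _ _ h)

lemma le_compl_D {x y : E} (h : A.le y (A.compl x)) : A.D x y := by
  obtain ⟨u, hu, he⟩ := h
  have hD : A.D (A.compl x) x := A.D_comm _ _ (A.D_compl x)
  rw [← he] at hD
  obtain ⟨hxy, _, _⟩ := A.assoc' x y u hu (A.D_comm _ _ hD)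
  exact hxy

lemma cancel_helper {a b : E} (h : A.D a b) :
    A.oplus (A.compl (A.oplus a b)) a = A.compl b := by
  obtain ⟨hD, he⟩ := A.oplus_compl_oplus h
  have hD2 : A.D (A.oplus b (A.compl (A.oplus a b))) a := by
    rw [he]; exact A.D_comm _ _ (A.D_compl a)
  obtain ⟨hD3, hD4, heq⟩ := A.assoc b (A.compl (A.oplus a b)) a hD hD2
  have h5 : A.oplus b (A.oplus (A.compl (A.oplus a b)) a) = A.one := by
    rw [← heq, he, A.oplus_comm _ _ (A.D_comm _ _ (A.D_compl a)), A.oplus_compl]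
  exact A.compl_unique b _ hD4 h5

lemma compl_inj {x y : E} (h : A.compl x = A.compl y) : x = y := by
  rw [← A.compl_compl x, h, A.compl_compl]

lemma cancel {a b c : E} (h1 : A.D a b) (h2 : A.D a c)
    (he : A.oplus a b = A.oplus a c) : b = c := by
  have e1 := A.cancel_helper h1
  have e2 := A.cancel_helper h2
  rw [← he] at e2
  exact A.compl_inj (e1 ▸ e2 ▸ rfl : A.compl b = A.compl c)

lemma oplus_eq_zero {u v : E} (h : A.D u v) (he : A.oplus u v = A.zero) :
    u = A.zero ∧ v = A.zero := by
  have hD : A.D (A.oplus u v) A.one := by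
    rw [he]; exact A.D_zero_left A.one
  obtain ⟨hD1, _, _⟩ := A.assoc u v A.one h hD
  have hv : v = A.zero := A.one_max v (A.D_comm _ _ hD1)
  subst hv
  rw [A.oplus_zero] at he
  exact ⟨he, rfl⟩

lemma le_zero {x : E} (h : A.le x A.zero) : x = A.zero := by
  obtain ⟨u, hu, he⟩ := h
  exact (A.oplus_eq_zero hu he).1

lemma le_antisymm {x y : E} (h1 : A.le x y) (h2 : A.le y x) : x = y := by
  obtain ⟨u, hu, rfl⟩ := h1
  obtain ⟨v, hv, he⟩ := h2
  obtain ⟨hD1, hD2, heq⟩ := A.assoc x u v hu hv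
  rw [heq] at he
  have h0 : A.oplus x (A.oplus u v) = A.oplus x A.zero := by rw [A.oplus_zero, he]
  have h3 := A.cancel hD2 (A.D_zero_right x) h0
  have h4 := (A.oplus_eq_zero hD1 h3).1
  rw [h4, A.oplus_zero]

lemma compl_anti {x y : E} (h : A.le x y) : A.le (A.compl y) (A.compl x) := by
  obtain ⟨u, hu, rfl⟩ := h
  have hD : A.D (A.oplus x u) (A.compl (A.oplus x u)) := A.D_compl _
  obtain ⟨hD1, hD2, heq⟩ := A.assoc x u (A.compl (A.oplus x u)) hu hD
  have h3 : A.oplus u (A.compl (A.oplus x u)) = A.compl x :=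
    A.compl_unique x _ hD2 (by rw [← heq, A.oplus_compl])
  exact ⟨u, A.D_comm _ _ hD1, by rw [A.oplus_comm _ _ (A.D_comm _ _ hD1), h3]⟩

lemma le_compl_comm {x y : E} (h : A.le x (A.compl y)) : A.le y (A.compl x) := by
  have := A.compl_anti h
  rwa [A.compl_compl] at this

lemma D_mono_right {x y z : E} (h : A.D x y) (hz : A.le z y) : A.D x z :=
  A.le_compl_D (A.le_trans hz (A.D_le_compl h))

lemma D_mono_left {x y z : E} (h : A.D x y) (hz : A.le z x) : A.D z y :=
  A.D_comm _ _ (A.D_mono_right (A.D_comm _ _ h) hz)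

lemma oplus_le_left {x x' y : E} (h : A.le x x') (hD : A.D x' y) :
    A.D x y ∧ A.le (A.oplus x y) (A.oplus x' y) := by
  obtain ⟨u, hu, rfl⟩ := h
  obtain ⟨hD1, hD2, heq⟩ := A.assoc x u y hu hD
  have hxyu : A.D x (A.oplus y u) := by
    rwa [A.oplus_comm _ _ hD1] at hD2
  obtain ⟨hxy, hDxyu, heq2⟩ := A.assoc' x y u (A.D_comm _ _ hD1) hxyu
  refine ⟨hxy, ⟨u, hDxyu, ?_⟩⟩
  rw [heq2, ← A.oplus_comm _ _ hD1, ← heq]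

lemma oplus_le_right {x y y' : E} (h : A.le y y') (hD : A.D x y') :
    A.D x y ∧ A.le (A.oplus x y) (A.oplus x y') := by
  obtain ⟨hD1, hle⟩ := A.oplus_le_left h (A.D_comm _ _ hD)
  refine ⟨A.D_comm _ _ hD1, ?_⟩
  rwa [A.oplus_comm _ _ hD1, A.oplus_comm _ _ (A.D_comm _ _ hD)] at hle

lemma oplus_le_oplus {x x' y y' : E} (hx : A.le x x') (hy : A.le y y')
    (hD : A.D x' y') : A.D x y ∧ A.le (A.oplus x y) (A.oplus x' y') := by
  obtain ⟨hD1, hle1⟩ := A.oplus_le_right hy hD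
  obtain ⟨hD2, hle2⟩ := A.oplus_le_left hx hD1
  exact ⟨hD2, A.le_trans hle2 hle1⟩

lemma le_of_oplus_le_oplus {z x y : E} (h1 : A.D z x) (h2 : A.D z y)
    (h : A.le (A.oplus z x) (A.oplus z y)) : A.le x y := by
  obtain ⟨u, hu, he⟩ := h
  obtain ⟨hD1, hD2, heq⟩ := A.assoc z x u h1 hu
  rw [heq] at he
  have := A.cancel hD2 h2 he
  exact ⟨u, hD1, this⟩

end EffectAlgebra
namespace EffectAlgebra

variable {E : Type u} (A : EffectAlgebra E)

section Lattice

variable (hL : A.LatticeOrdered)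

noncomputable def mt (x y : E) : E := ((hL x y).1).choose

noncomputable def jn (x y : E) : E := ((hL x y).2).choose

lemma mt_spec (x y : E) : A.IsInfIn Set.univ {x, y} (A.mt hL x y) :=
  ((hL x y).1).choose_spec

lemma jn_spec (x y : E) : A.IsSupIn Set.univ {x, y} (A.jn hL x y) :=
  ((hL x y).2).choose_spec

lemma mt_le_left (x y : E) : A.le (A.mt hL x y) x :=
  (A.mt_spec hL x y).2.1 x (Set.mem_insert _ _)

lemma mt_le_right (x y : E) : A.le (A.mt hL x y) y :=
  (A.mt_spec hL x y).2.1 y (Set.mem_insert_of_mem _ rfl)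

lemma le_mt {x y z : E} (h1 : A.le z x) (h2 : A.le z y) :
    A.le z (A.mt hL x y) := by
  refine (A.mt_spec hL x y).2.2 z (Set.mem_univ z) ?_
  intro w hw
  rcases hw with h | h
  · subst h; exact h1
  · rw [Set.mem_singleton_iff] at h; subst h; exact h2

lemma le_jn_left (x y : E) : A.le x (A.jn hL x y) :=
  (A.jn_spec hL x y).2.1 x (Set.mem_insert _ _)

lemma le_jn_right (x y : E) : A.le y (A.jn hL x y) :=
  (A.jn_spec hL x y).2.1 y (Set.mem_insert_of_mem _ rfl)

lemma jn_le {x y z : E} (h1 : A.le x z) (h2 : A.le y z) :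
    A.le (A.jn hL x y) z := by
  refine (A.jn_spec hL x y).2.2 z (Set.mem_univ z) ?_
  intro w hw
  rcases hw with h | h
  · subst h; exact h1
  · rw [Set.mem_singleton_iff] at h; subst h; exact h2

lemma compl_jn (x y : E) :
    A.compl (A.jn hL x y) = A.mt hL (A.compl x) (A.compl y) := by
  apply A.le_antisymm
  · exact A.le_mt hL (A.compl_anti (A.le_jn_left hL x y))
      (A.compl_anti (A.le_jn_right hL x y))
  · apply A.le_compl_comm
    apply A.jn_le hL
    · exact A.le_compl_comm (A.mt_le_left hL (A.compl x) (A.compl y))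
    · exact A.le_compl_comm (A.mt_le_right hL (A.compl x) (A.compl y))

/-- The key orthogonality identity: if `D x y` and `x ∧ y = 0` then
`x ⊕ y = x ∨ y`. -/
lemma oplus_eq_jn {x y : E} (hD : A.D x y) (hm : A.mt hL x y = A.zero) :
    A.oplus x y = A.jn hL x y := by
  have hxw : A.le x (A.oplus x y) := ⟨y, hD, rfl⟩
  have hyw : A.le y (A.oplus x y) :=
    ⟨x, A.D_comm _ _ hD, A.oplus_comm _ _ (A.D_comm _ _ hD)⟩
  have hjw : A.le (A.jn hL x y) (A.oplus x y) := A.jn_le hL hxw hyw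
  obtain ⟨d, hd, hjd⟩ := hjw
  -- d ≤ x
  have hdx : A.le d x := by
    obtain ⟨p, hp, hyp⟩ := A.le_jn_right hL x y
    have hD2 : A.D (A.oplus y p) d := by rw [hyp]; exact hd
    obtain ⟨hD3, hD4, heq⟩ := A.assoc y p d hp hD2
    rw [← hyp] at hjd
    rw [heq] at hjd
    have : A.oplus y (A.oplus p d) = A.oplus y x := by
      rw [hjd, A.oplus_comm _ _ hD]
    have hpd := A.cancel hD4 (A.D_comm _ _ hD) this
    exact ⟨p, A.D_comm _ _ hD3, by rw [A.oplus_comm _ _ (A.D_comm _ _ hD3), hpd]⟩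
  -- d ≤ y
  have hdy : A.le d y := by
    obtain ⟨p, hp, hxp⟩ := A.le_jn_left hL x y
    have hD2 : A.D (A.oplus x p) d := by rw [hxp]; exact hd
    obtain ⟨hD3, hD4, heq⟩ := A.assoc x p d hp hD2
    rw [← hxp] at hjd
    rw [heq] at hjd
    have hpd := A.cancel hD4 hD hjd
    exact ⟨p, A.D_comm _ _ hD3, by rw [A.oplus_comm _ _ (A.D_comm _ _ hD3), hpd]⟩
  have hd0 : d = A.zero := by
    have := A.le_mt hL hdx hdy
    rw [hm] at this
    exact A.le_zero this
  rw [← hjd, hd0, A.oplus_zero]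

end Lattice

section Sums

lemma sumDef_nil_eq {s : E} (h : A.SumDef [] s) : s = A.zero := by
  cases h; rfl

lemma sumDef_cons_iff {a : E} {l : List E} {s : E} (h : A.SumDef (a :: l) s) :
    ∃ u, A.SumDef l u ∧ A.D a u ∧ s = A.oplus a u := by
  cases h with
  | cons h hD => exact ⟨_, h, hD, rfl⟩

lemma sumDef_unique {l : List E} {s s' : E} (h : A.SumDef l s)
    (h' : A.SumDef l s') : s = s' := by
  induction l generalizing s s' with
  | nil => rw [A.sumDef_nil_eq h, A.sumDef_nil_eq h']
  | cons a l ih =>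
    obtain ⟨u, hu, _, rfl⟩ := A.sumDef_cons_iff h
    obtain ⟨u', hu', _, rfl⟩ := A.sumDef_cons_iff h'
    rw [ih hu hu']

lemma sumDef_perm {l l' : List E} (hp : l.Perm l') {s : E} (h : A.SumDef l s) :
    A.SumDef l' s := by
  induction hp generalizing s with
  | nil => exact h
  | cons a _ ih =>
    obtain ⟨u, hu, hD, rfl⟩ := A.sumDef_cons_iff h
    exact SumDef.cons (ih hu) hD
  | swap a b l =>
    obtain ⟨u, hu, hDb, rfl⟩ := A.sumDef_cons_iff h
    obtain ⟨v, hv, hDa, rfl⟩ := A.sumDef_cons_iff hu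
    -- have `b ⊕ (a ⊕ v)`, want `a ⊕ (b ⊕ v)` as a SumDef of a :: b :: l
    have hvav : A.le v (A.oplus a v) :=
      ⟨a, A.D_comm _ _ hDa, A.oplus_comm _ _ (A.D_comm _ _ hDa)⟩
    obtain ⟨hDba, hD2, heq⟩ := A.assoc' b a v hDa hDb
    have hD3 : A.D (A.oplus a b) v := by
      rwa [A.oplus_comm _ _ hDba] at hD2
    obtain ⟨hDbv, hD4, heq2⟩ := A.assoc a b v (A.D_comm _ _ hDba) hD3
    have : A.oplus b (A.oplus a v) = A.oplus a (A.oplus b v) := by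
      rw [← heq, A.oplus_comm _ _ hDba, heq2]
    rw [this]
    exact SumDef.cons (SumDef.cons hv hDbv) hD4
  | trans _ _ ih1 ih2 => exact ih2 (ih1 h)

/-- dominated families: sums of smaller elements are defined and smaller. -/
lemma sumDef_dominated {ι : Type v} {x w : ι → E} (hxw : ∀ k, A.le (x k) (w k)) :
    ∀ l : List ι, ∀ sw, A.SumDef (l.map w) sw →
      ∃ sx, A.SumDef (l.map x) sx ∧ A.le sx sw := by
  intro l
  induction l with
  | nil =>
    intro sw hsw
    rw [List.map_nil] at hsw
    rw [A.sumDef_nil_eq hsw, List.map_nil]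
    exact ⟨A.zero, SumDef.nil, A.le_refl _⟩
  | cons k l ih =>
    intro sw hsw
    rw [List.map_cons] at hsw
    obtain ⟨u, hu, hD, rfl⟩ := A.sumDef_cons_iff hsw
    obtain ⟨sx, hsx, hle⟩ := ih u hu
    obtain ⟨hD2, hle2⟩ := A.oplus_le_oplus (hxw k) hle hD
    rw [List.map_cons]
    exact ⟨A.oplus (x k) sx, SumDef.cons hsx hD2, hle2⟩

end Sums

end EffectAlgebra
namespace EffectAlgebra

/-- `n`-fold sum of `a` as a total function. -/
def pw {E : Type u} (A : EffectAlgebra E) : ℕ → E → E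
  | 0, _ => A.zero
  | n + 1, a => A.oplus a (pw A n a)

/-- definedness of the `n`-fold sum. -/
def pwDef {E : Type u} (A : EffectAlgebra E) : ℕ → E → Prop
  | 0, _ => True
  | n + 1, a => pwDef A n a ∧ A.D a (pw A n a)

variable {E : Type u} (A : EffectAlgebra E)

lemma pw_zero (a : E) : A.pw 0 a = A.zero := rfl

lemma pw_succ (n : ℕ) (a : E) : A.pw (n + 1) a = A.oplus a (A.pw n a) := rfl

lemma pwDef_succ {n : ℕ} {a : E} (h : A.pwDef (n + 1) a) :
    A.pwDef n a ∧ A.D a (A.pw n a) := h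

lemma pw_one (a : E) : A.pw 1 a = a := by
  rw [pw_succ, pw_zero, A.oplus_zero]

lemma pwDef_one (a : E) : A.pwDef 1 a := ⟨trivial, A.D_zero_right a⟩

lemma sumDef_replicate {n : ℕ} {a : E} (h : A.pwDef n a) :
    A.SumDef (List.replicate n a) (A.pw n a) := by
  induction n with
  | zero => exact SumDef.nil
  | succ n ih =>
    rw [List.replicate_succ, pw_succ]
    exact SumDef.cons (ih h.1) h.2

lemma nTimesDef_iff {n : ℕ} {a : E} : A.nTimesDef n a ↔ A.pwDef n a := by
  constructor
  · rintro ⟨s, hs⟩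
    induction n generalizing s with
    | zero => trivial
    | succ n ih =>
      rw [List.replicate_succ] at hs
      obtain ⟨u, hu, hD, rfl⟩ := A.sumDef_cons_iff hs
      have h1 : A.pwDef n a := ih u hu
      have h2 : u = A.pw n a := A.sumDef_unique hu (A.sumDef_replicate h1)
      exact ⟨h1, h2 ▸ hD⟩
  · intro h
    exact ⟨A.pw n a, A.sumDef_replicate h⟩

lemma pwDef_mono {k n : ℕ} {a : E} (hk : k ≤ n) (h : A.pwDef n a) :
    A.pwDef k a := by
  induction n with
  | zero => rwa [Nat.le_zero.mp hk]
  | succ n ih =>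
    rcases Nat.lt_or_ge k (n + 1) with h' | h'
    · exact ih (Nat.lt_succ_iff.mp h') h.1
    · rwa [Nat.le_antisymm hk h']

lemma pw_le_succ {n : ℕ} {a : E} (h : A.pwDef (n + 1) a) :
    A.le (A.pw n a) (A.pw (n + 1) a) :=
  ⟨a, A.D_comm _ _ h.2, by rw [A.oplus_comm _ _ (A.D_comm _ _ h.2), pw_succ]⟩

lemma pw_le_pw {k n : ℕ} {a : E} (hk : k ≤ n) (h : A.pwDef n a) :
    A.le (A.pw k a) (A.pw n a) := by
  induction n with
  | zero => rw [Nat.le_zero.mp hk]; exact A.le_refl _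
  | succ n ih =>
    rcases Nat.lt_or_ge k (n + 1) with h' | h'
    · exact A.le_trans (ih (Nat.lt_succ_iff.mp h') h.1) (A.pw_le_succ h)
    · rw [Nat.le_antisymm hk h']; exact A.le_refl _

lemma pw_succ' {n : ℕ} {a : E} (h : A.pwDef (n + 1) a) :
    A.pw (n + 1) a = A.oplus (A.pw n a) a := by
  rw [pw_succ, A.oplus_comm _ _ h.2]

/-- Key claim: no atom `b ≠ a` lies below both `j·a` and its complement. -/
lemma atom_not_le_pw (hL : A.LatticeOrdered) {a b : E} (ha : A.Atom a)
    (hb : A.Atom b) (hne : b ≠ a) :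
    ∀ j : ℕ, A.pwDef j a → A.le b (A.pw j a) →
      A.le b (A.compl (A.pw j a)) → False := by
  intro j
  induction j with
  | zero =>
    intro _ hble _
    rw [pw_zero] at hble
    exact hb.1 (A.le_zero hble)
  | succ j ih =>
    intro hdef hble hble'
    have hble'' : A.le b (A.compl (A.pw j a)) :=
      A.le_trans hble' (A.compl_anti (A.pw_le_succ hdef))
    have hnot : ¬ A.le b (A.pw j a) := fun h => ih hdef.1 h hble''
    have hcle : A.le (A.jn hL (A.pw j a) b) (A.pw (j + 1) a) :=
      A.jn_le hL (A.pw_le_succ hdef) hble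
    obtain ⟨r, hr, hcr⟩ := A.le_jn_left hL (A.pw j a) b
    have hra : A.le r a := by
      apply A.le_of_oplus_le_oplus hr (A.D_comm _ _ hdef.2)
      rw [hcr, ← A.pw_succ' hdef]
      exact hcle
    rcases ha.2 r hra with h0 | hra'
    · rw [h0, A.oplus_zero] at hcr
      exact hnot (hcr ▸ A.le_jn_right hL (A.pw j a) b)
    · rw [hra'] at hcr
      have hm : A.mt hL (A.pw j a) b = A.zero := by
        rcases hb.2 _ (A.mt_le_right hL (A.pw j a) b) with h0 | hbm
        · exact h0
        · exact absurd (hbm ▸ A.mt_le_left hL (A.pw j a) b) hnot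
      have hDjb : A.D (A.pw j a) b := A.le_compl_D hble''
      have heq : A.oplus (A.pw j a) b = A.oplus (A.pw j a) a := by
        rw [A.oplus_eq_jn hL hDjb hm, ← hcr]
      exact hne (A.cancel hDjb (A.D_comm _ _ hdef.2) heq)

/-- `n·a` is sharp when `n = ord(a)`. -/
lemma pw_sharp (hL : A.LatticeOrdered) (hAtomic : A.Atomic) {a : E} {n : ℕ}
    (ha : A.Atom a) (hdef : A.pwDef n a) (hmax : ¬ A.pwDef (n + 1) a) :
    A.Sharp (A.pw n a) := by
  refine ⟨Set.mem_univ _, ?_, ?_⟩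
  · intro x _; exact A.zero_le x
  · intro z _ hz
    have h1 : A.le z (A.pw n a) := hz _ (Set.mem_insert _ _)
    have h2 : A.le z (A.compl (A.pw n a)) := hz _ (Set.mem_insert_of_mem _ rfl)
    have hz0 : z = A.zero := by
      by_contra hz0
      obtain ⟨b, hb, hbz⟩ := hAtomic z hz0
      have hb1 : A.le b (A.pw n a) := A.le_trans hbz h1
      have hb2 : A.le b (A.compl (A.pw n a)) := A.le_trans hbz h2
      by_cases hba : b = a
      · subst hba
        exact hmax ⟨hdef, A.D_comm _ _ (A.le_compl_D hb2)⟩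
      · exact A.atom_not_le_pw hL ha hb hba n hdef hb1 hb2
    rw [hz0]; exact A.le_refl _

/-- boost on the left: if `D (j·a) b` then `D ((j+1)·a) b`. -/
lemma boost_left_step (hL : A.LatticeOrdered) {a b : E} (ha : A.Atom a)
    (hb : A.Atom b) (hne : b ≠ a) (hD : A.D a b) {j : ℕ}
    (hdef : A.pwDef (j + 1) a) (hDjb : A.D (A.pw j a) b) :
    A.D (A.pw (j + 1) a) b := by
  have hm : A.mt hL (A.pw j a) b = A.zero := by
    rcases hb.2 _ (A.mt_le_right hL (A.pw j a) b) with h0 | hbm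
    · exact h0
    · exfalso
      exact A.atom_not_le_pw hL ha hb hne j hdef.1
        (hbm ▸ A.mt_le_left hL (A.pw j a) b) (A.D_le_compl hDjb)
  have hkey : A.le a (A.compl (A.jn hL (A.pw j a) b)) := by
    rw [A.compl_jn]
    exact A.le_mt hL (A.D_le_compl' hdef.2) (A.D_le_compl' hD)
  have hD2 : A.D (A.oplus (A.pw j a) b) a := by
    rw [A.oplus_eq_jn hL hDjb hm]
    exact A.le_compl_D hkey
  obtain ⟨_, hD3, _⟩ := A.assoc' a (A.pw j a) b hDjb (A.D_comm _ _ hD2)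
  rwa [← pw_succ] at hD3

lemma boost_left (hL : A.LatticeOrdered) {a b : E} (ha : A.Atom a)
    (hb : A.Atom b) (hne : b ≠ a) (hD : A.D a b) {n : ℕ} (h1 : 1 ≤ n)
    (hdef : A.pwDef n a) : A.D (A.pw n a) b := by
  induction n with
  | zero => omega
  | succ n ih =>
    rcases Nat.eq_or_lt_of_le h1 with h' | h'
    · rw [← h', pw_one]; exact hD
    · exact A.boost_left_step hL ha hb hne hD hdef
        (ih (Nat.lt_succ_iff.mp h') hdef.1)

/-- boost on the right against a sharp element. -/
lemma boost_right_step (hL : A.LatticeOrdered) {u b : E} (hu : A.Sharp u)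
    {i : ℕ} (h1 : 1 ≤ i) (hdef : A.pwDef (i + 1) b)
    (hD : A.D u (A.pw i b)) : A.D u (A.pw (i + 1) b) := by
  have hm : A.mt hL u (A.pw i b) = A.zero := by
    have hmle : A.le (A.mt hL u (A.pw i b)) A.zero := by
      refine hu.2.2 _ (Set.mem_univ _) ?_
      intro w hw
      rcases hw with h | h
      · subst h; exact A.mt_le_left hL _ _
      · rw [Set.mem_singleton_iff] at h; subst h
        exact A.le_trans (A.mt_le_right hL _ _) (A.D_le_compl hD)
    exact A.le_zero hmle
  have hkey : A.le b (A.compl (A.jn hL u (A.pw i b))) := by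
    rw [A.compl_jn]
    refine A.le_mt hL ?_ (A.D_le_compl' hdef.2)
    have hbi : A.le b (A.pw i b) := by
      have := A.pw_le_pw h1 hdef.1
      rwa [pw_one] at this
    exact A.le_trans hbi (A.D_le_compl hD)
  have hD2 : A.D (A.oplus u (A.pw i b)) b := by
    rw [A.oplus_eq_jn hL hD hm]
    exact A.le_compl_D hkey
  obtain ⟨hDpb, hD3, _⟩ := A.assoc u (A.pw i b) b hD hD2
  rw [pw_succ]
  rwa [A.oplus_comm _ _ hDpb] at hD3

lemma boost_right (hL : A.LatticeOrdered) {u b : E} (hu : A.Sharp u)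
    (hDub : A.D u b) {n : ℕ} (h1 : 1 ≤ n) (hdef : A.pwDef n b) :
    A.D u (A.pw n b) := by
  induction n with
  | zero => omega
  | succ n ih =>
    rcases Nat.eq_or_lt_of_le h1 with h' | h'
    · rw [← h', pw_one]; exact hDub
    · have h1n : 1 ≤ n := Nat.lt_succ_iff.mp h'
      exact A.boost_right_step hL hu h1n hdef (ih h1n hdef.1)

/-- Core lemma: orthogonal distinct atoms have orthogonal sharp covers. -/
lemma cover_orth (hL : A.LatticeOrdered) (hAtomic : A.Atomic) {a b : E}
    (ha : A.Atom a) (hb : A.Atom b) (hne : a ≠ b) (hD : A.D a b)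
    {na nb : ℕ} (h1a : 1 ≤ na) (hdefa : A.pwDef na a)
    (hmaxa : ¬ A.pwDef (na + 1) a) (h1b : 1 ≤ nb) (hdefb : A.pwDef nb b) :
    A.D (A.pw na a) (A.pw nb b) := by
  have hsharp : A.Sharp (A.pw na a) := A.pw_sharp hL hAtomic ha hdefa hmaxa
  have hstep1 : A.D (A.pw na a) b :=
    A.boost_left hL ha hb (fun h => hne h.symm) hD h1a hdefa
  exact A.boost_right hL hsharp hstep1 h1b hdefb

end EffectAlgebra
namespace EffectAlgebra

variable {E : Type u} (A : EffectAlgebra E)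

/-- A pairwise-orthogonal family of sharp elements has all finite sums defined,
and the sums satisfy a De-Morgan-style bound transfer. -/
lemma sharp_pairwise_sums (hL : A.LatticeOrdered) {ι : Type v} (w : ι → E)
    (hsharp : ∀ k, A.Sharp (w k))
    (hpair : ∀ k k', k ≠ k' → A.D (w k) (w k')) :
    ∀ l : List ι, l.Nodup → ∃ s, A.SumDef (l.map w) s ∧
      ∀ c, (∀ k ∈ l, A.le c (A.compl (w k))) → A.le c (A.compl s) := by
  intro l
  induction l with
  | nil =>
    intro _
    refine ⟨A.zero, SumDef.nil, ?_⟩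
    intro c _
    rw [A.compl_zero]
    exact A.le_one c
  | cons k l ih =>
    intro hnd
    obtain ⟨s, hs, hP⟩ := ih hnd.of_cons
    have hknotin : k ∉ l := (List.nodup_cons.mp hnd).1
    have hwk_le : A.le (w k) (A.compl s) := by
      apply hP
      intro k' hk'
      have hne : k ≠ k' := fun h => hknotin (h ▸ hk')
      exact A.D_le_compl' (hpair k k' hne)
    have hD : A.D (w k) s := A.D_comm _ _ (A.le_compl_D hwk_le)
    refine ⟨A.oplus (w k) s, ?_, ?_⟩
    · rw [List.map_cons]
      exact SumDef.cons hs hD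
    · intro c hc
      have hm : A.mt hL (w k) s = A.zero := by
        apply A.le_zero
        refine (hsharp k).2.2 _ (Set.mem_univ _) ?_
        intro z hz
        rcases hz with h | h
        · subst h; exact A.mt_le_left hL _ _
        · rw [Set.mem_singleton_iff] at h; subst h
          exact A.le_trans (A.mt_le_right hL _ _) (A.D_le_compl hD)
      rw [A.oplus_eq_jn hL hD hm, A.compl_jn]
      refine A.le_mt hL (hc k List.mem_cons_self) ?_
      exact hP c fun k' hk' => hc k' (List.mem_cons_of_mem k hk')

end EffectAlgebra
namespace EffectAlgebra

variable {E : Type u} (A : EffectAlgebra E)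

lemma map_pmap_subtype {p : E → Prop} (g : E → E) :
    ∀ (l : List E) (H : ∀ e ∈ l, p e),
      (l.pmap (fun e h => (⟨e, h⟩ : {a : E // p a})) H).map (fun k => g k.1)
        = l.map g := by
  intro l
  induction l with
  | nil => intro H; rfl
  | cons e l ih =>
    intro H
    rw [List.pmap, List.map_cons, List.map_cons, ih]

lemma exists_sup (hL : A.LatticeOrdered) (hArch : A.IsArchimedean)
    (hAtomic : A.Atomic) (hSO : A.SharplyOrthocomplete) (T : Set E) :
    ∃ v, A.IsSupIn Set.univ T v := by
  classical
  -- every atom has a finite order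
  have hordex : ∀ a : E, A.Atom a →
      ∃ n, 1 ≤ n ∧ A.pwDef n a ∧ ¬ A.pwDef (n + 1) a := by
    intro a ha
    obtain ⟨N, hN⟩ := hArch a ha.1
    rw [A.nTimesDef_iff] at hN
    have hex : ∃ m, ¬ A.pwDef m a := ⟨N, hN⟩
    have hm : ¬ A.pwDef (Nat.find hex) a := Nat.find_spec hex
    have hm0 : Nat.find hex ≠ 0 := fun h => hm (h ▸ (trivial : A.pwDef 0 a))
    have hm1 : Nat.find hex ≠ 1 := fun h => hm (h ▸ A.pwDef_one a)
    obtain ⟨n, hn⟩ : ∃ n, Nat.find hex = n + 1 := ⟨Nat.find hex - 1, by omega⟩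
    refine ⟨n, by omega, ?_, hn ▸ hm⟩
    have := Nat.find_min hex (m := n) (by omega)
    exact not_not.mp this
  choose! nd hnd1 hnd2 hnd3 using hordex
  -- the admissible set of multiplicity functions
  set S : Set (E → ℕ) := {f |
    (∀ e, f e ≠ 0 → A.Atom e ∧ A.pwDef (f e) e) ∧
    (∀ e e', f e ≠ 0 → f e' ≠ 0 → e ≠ e' → A.D e e') ∧
    (∀ l : List E, l.Nodup → (∀ e ∈ l, f e ≠ 0) → ∀ s,
      A.SumDef (l.map (fun e => A.pw (f e) e)) s →
        ∀ z, A.IsUB T z → A.le s z)} with hSdef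
  -- Zorn's lemma
  have hchain : ∀ c ⊆ S, IsChain (· ≤ ·) c → ∃ ub ∈ S, ∀ z ∈ c, z ≤ ub := by
    intro c hcS hchain
    rcases c.eq_empty_or_nonempty with rfl | ⟨g₀, hg₀⟩
    · refine ⟨fun _ => 0, ⟨?_, ?_, ?_⟩, by simp⟩
      · intro e he; exact absurd rfl he
      · intro e e' he; exact absurd rfl he
      · intro l hnd h0 s hs z hz
        cases l with
        | nil =>
          rw [List.map_nil] at hs
          rw [A.sumDef_nil_eq hs]
          exact A.zero_le z
        | cons e l => exact absurd rfl (h0 e List.mem_cons_self)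
    · have hbdd : ∀ e, BddAbove ((fun g => g e) '' c) := by
        intro e
        refine ⟨nd e, ?_⟩
        rintro m ⟨g, hg, rfl⟩
        by_cases h : g e = 0
        · show g e ≤ nd e
          rw [h]; exact Nat.zero_le _
        · have hat := (hcS hg).1 e h
          by_contra hgt
          push_neg at hgt
          exact hnd3 e hat.1 (A.pwDef_mono (by omega) hat.2)
      have hnee : ∀ e, ((fun g => g e) '' c).Nonempty :=
        fun e => ⟨g₀ e, ⟨g₀, hg₀, rfl⟩⟩
      set F : E → ℕ := fun e => sSup ((fun g => g e) '' c) with hFdef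
      have hFmem : ∀ e, ∃ g ∈ c, g e = F e := by
        intro e
        obtain ⟨g, hg, h⟩ := Nat.sSup_mem (hnee e) (hbdd e)
        exact ⟨g, hg, h⟩
      have hFub : ∀ g ∈ c, ∀ e, g e ≤ F e :=
        fun g hg e => le_csSup (hbdd e) ⟨g, hg, rfl⟩
      have hfin : ∀ l : List E, ∃ h ∈ c, ∀ e ∈ l, h e = F e := by
        intro l
        induction l with
        | nil => exact ⟨g₀, hg₀, by simp⟩
        | cons e l ih =>
          obtain ⟨h, hh, hhl⟩ := ih
          obtain ⟨g, hg, hge⟩ := hFmem e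
          rcases hchain.total hh hg with hle | hle
          · refine ⟨g, hg, ?_⟩
            intro e' he'
            rcases List.mem_cons.mp he' with rfl | he'
            · exact hge
            · exact Nat.le_antisymm (hFub g hg e')
                (by rw [← hhl e' he']; exact hle e')
          · refine ⟨h, hh, ?_⟩
            intro e' he'
            rcases List.mem_cons.mp he' with rfl | he'
            · exact Nat.le_antisymm (hFub h hh e') (by rw [← hge]; exact hle e')
            · exact hhl e' he'
      refine ⟨F, ⟨?_, ?_, ?_⟩, fun g hg e => hFub g hg e⟩
      · intro e he
        obtain ⟨g, hg, hge⟩ := hFmem e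
        have hg0 : g e ≠ 0 := by rw [hge]; exact he
        have := (hcS hg).1 e hg0
        rwa [hge] at this
      · intro e e' he he' hne'
        obtain ⟨h, hh, hhl⟩ := hfin [e, e']
        have h1 : h e = F e := hhl e (by simp)
        have h2 : h e' = F e' := hhl e' (by simp)
        exact (hcS hh).2.1 e e' (by rw [h1]; exact he) (by rw [h2]; exact he') hne'
      · intro l hnd h0 s hs z hz
        obtain ⟨h, hh, hhl⟩ := hfin l
        have hmap : l.map (fun e => A.pw (F e) e) = l.map (fun e => A.pw (h e) e) :=
          List.map_congr_left (fun e he => by rw [hhl e he])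
        rw [hmap] at hs
        exact (hcS hh).2.2 l hnd (fun e he => by rw [hhl e he]; exact h0 e he) s hs z hz
  obtain ⟨f, hfmax⟩ := zorn_le₀ S hchain
  have hfS := hfmax.1
  -- apply sharp orthocompleteness to the maximal family
  have hatom : ∀ e, f e ≠ 0 → A.Atom e := fun e he => (hfS.1 e he).1
  have hfle : ∀ e, f e ≠ 0 → f e ≤ nd e := by
    intro e he
    by_contra hgt
    push_neg at hgt
    exact hnd3 e (hatom e he) (A.pwDef_mono (by omega) (hfS.1 e he).2)
  have hsharp : ∀ k : {a : E // f a ≠ 0}, A.Sharp (A.pw (nd k.1) k.1) :=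
    fun k => A.pw_sharp hL hAtomic (hatom k.1 k.2) (hnd2 k.1 (hatom k.1 k.2))
      (hnd3 k.1 (hatom k.1 k.2))
  have hpair : ∀ k k' : {a : E // f a ≠ 0}, k ≠ k' →
      A.D (A.pw (nd k.1) k.1) (A.pw (nd k'.1) k'.1) := by
    intro k k' hne
    have hvne : k.1 ≠ k'.1 := fun h => hne (Subtype.ext h)
    exact A.cover_orth hL hAtomic (hatom k.1 k.2) (hatom k'.1 k'.2) hvne
      (hfS.2.1 k.1 k'.1 k.2 k'.2 hvne)
      (hnd1 k.1 (hatom k.1 k.2)) (hnd2 k.1 (hatom k.1 k.2))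
      (hnd3 k.1 (hatom k.1 k.2))
      (hnd1 k'.1 (hatom k'.1 k'.2)) (hnd2 k'.1 (hatom k'.1 k'.2))
  have horth : A.Orthogonal (fun k : {a : E // f a ≠ 0} => A.pw (nd k.1) k.1) := by
    intro l hnd
    obtain ⟨s, hs, _⟩ := A.sharp_pairwise_sums hL _ hsharp hpair l hnd
    exact ⟨s, hs⟩
  have hxw : ∀ k : {a : E // f a ≠ 0},
      A.le (A.pw (f k.1) k.1) (A.pw (nd k.1) k.1) :=
    fun k => A.pw_le_pw (hfle k.1 k.2) (hnd2 k.1 (hatom k.1 k.2))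
  obtain ⟨v, hvOrth, hvSup⟩ := hSO {a : E // f a ≠ 0}
    (fun k => A.pw (f k.1) k.1) (fun k => A.pw (nd k.1) k.1) hsharp horth hxw
  -- lifting E-lists to finiteSums membership
  have hlift : ∀ (lE : List E) (h0 : ∀ e ∈ lE, f e ≠ 0), lE.Nodup → ∀ s',
      A.SumDef (lE.map (fun e => A.pw (f e) e)) s' →
        s' ∈ A.finiteSums (fun k : {a : E // f a ≠ 0} => A.pw (f k.1) k.1) := by
    intro lE h0 hnd s' hs'
    refine ⟨lE.pmap (fun e h => (⟨e, h⟩ : {a : E // f a ≠ 0})) h0, ?_, ?_⟩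
    · exact List.Nodup.pmap (fun a _ b _ h => congrArg Subtype.val h) hnd
    · rw [map_pmap_subtype (p := fun a => f a ≠ 0) (fun e => A.pw (f e) e) lE h0]
      exact hs'
  -- v is below every upper bound of T
  have hsum_inv : ∀ s ∈ A.finiteSums (fun k : {a : E // f a ≠ 0} => A.pw (f k.1) k.1),
      ∀ z, A.IsUB T z → A.le s z := by
    rintro s ⟨l, hnd, hs⟩ z hz
    have hndE : (l.map Subtype.val).Nodup := hnd.map Subtype.val_injective
    have h0 : ∀ e ∈ l.map Subtype.val, f e ≠ 0 := by
      rintro e he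
      obtain ⟨k, _, rfl⟩ := List.mem_map.mp he
      exact k.2
    have hmap : (l.map Subtype.val).map (fun e => A.pw (f e) e)
        = l.map (fun k : {a : E // f a ≠ 0} => A.pw (f k.1) k.1) := by
      rw [List.map_map]; rfl
    exact hfS.2.2 (l.map Subtype.val) hndE h0 s (by rw [hmap]; exact hs) z hz
  have hvle : ∀ z, A.IsUB T z → A.le v z :=
    fun z hz => hvSup.2.2 z (Set.mem_univ z) (fun s hs => hsum_inv s hs z hz)
  -- v is an upper bound of T (by maximality)
  have hUB : ∀ t ∈ T, A.le t v := by
    intro t ht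
    by_contra htv
    obtain ⟨e₀, hDe₀, hve₀⟩ := A.le_jn_right hL t v
    have he₀ : e₀ ≠ A.zero := by
      intro h
      rw [h, A.oplus_zero] at hve₀
      exact htv (hve₀ ▸ A.le_jn_left hL t v)
    obtain ⟨b, hb, hbe₀⟩ := hAtomic e₀ he₀
    have hDvb : A.D v b := A.D_mono_right hDe₀ hbe₀
    have hple : ∀ e, f e ≠ 0 → A.le (A.pw (f e) e) v := by
      intro e he
      have hmem : A.oplus (A.pw (f e) e) A.zero ∈
          A.finiteSums (fun k : {a : E // f a ≠ 0} => A.pw (f k.1) k.1) :=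
        ⟨[⟨e, he⟩], List.nodup_singleton _, by
          rw [List.map_singleton]
          exact SumDef.cons SumDef.nil (A.D_zero_right _)⟩
      have := hvSup.2.1 _ hmem
      rwa [A.oplus_zero] at this
    have hpble : A.le (A.pw (f b) b) v := by
      by_cases hfb : f b = 0
      · rw [hfb, pw_zero]; exact A.zero_le v
      · exact hple b hfb
    have hDpb : A.D (A.pw (f b) b) b := A.D_mono_left hDvb hpble
    have hpwDefb1 : A.pwDef (f b + 1) b := by
      refine ⟨?_, A.D_comm _ _ hDpb⟩
      by_cases hfb : f b = 0
      · rw [hfb]; trivial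
      · exact (hfS.1 b hfb).2
    set g : E → ℕ := Function.update f b (f b + 1) with hgdef
    have hgb : g b = f b + 1 := Function.update_self b (f b + 1) f
    have hgne : ∀ e, e ≠ b → g e = f e := fun e he => Function.update_of_ne he _ f
    have hgS : g ∈ S := by
      refine ⟨?_, ?_, ?_⟩
      · intro e he
        by_cases heb : e = b
        · rw [heb] at he ⊢
          rw [hgb]
          exact ⟨hb, hpwDefb1⟩
        · rw [hgne e heb] at he ⊢
          exact hfS.1 e he
      · intro e e' he he' hne'
        have hDatom : ∀ e'', f e'' ≠ 0 → e'' ≠ b → A.D e'' b := by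
          intro e'' he'' _
          have h1 : A.le (A.pw (f e'') e'') v := hple e'' he''
          have hD1 : A.D (A.pw (f e'') e'') b := A.D_mono_left hDvb h1
          have h2 : A.le e'' (A.pw (f e'') e'') := by
            have := A.pw_le_pw (Nat.one_le_iff_ne_zero.mpr he'') (hfS.1 e'' he'').2
            rwa [pw_one] at this
          exact A.D_mono_left hD1 h2
        by_cases heb : e = b
        · have he'b : e' ≠ b := fun h => hne' (heb.trans h.symm)
          rw [hgne e' he'b] at he'
          rw [heb]
          exact A.D_comm _ _ (hDatom e' he' he'b)
        · by_cases he'b : e' = b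
          · rw [hgne e heb] at he
            rw [he'b]
            exact hDatom e he heb
          · rw [hgne e heb] at he
            rw [hgne e' he'b] at he'
            exact hfS.2.1 e e' he he' hne'
      · intro l hnd h0 s hs z hz
        by_cases hbl : b ∈ l
        · have hperm : (l.map (fun e => A.pw (g e) e)).Perm
              ((b :: l.erase b).map (fun e => A.pw (g e) e)) :=
            (List.perm_cons_erase hbl).map _
          have hs' := A.sumDef_perm hperm hs
          rw [List.map_cons] at hs'
          obtain ⟨s₂, hs₂, hDs₂, rfl⟩ := A.sumDef_cons_iff hs'
          have hbne : b ∉ l.erase b := hnd.not_mem_erase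
          have herase_ne : ∀ e ∈ l.erase b, e ≠ b := fun e he heq => hbne (heq ▸ he)
          have hmap2 : (l.erase b).map (fun e => A.pw (g e) e)
              = (l.erase b).map (fun e => A.pw (f e) e) :=
            List.map_congr_left fun e he => by rw [hgne e (herase_ne e he)]
          rw [hmap2] at hs₂
          have hvalgb : A.pw (g b) b = A.oplus b (A.pw (f b) b) := by
            rw [hgb, pw_succ]
          rw [hvalgb] at hDs₂ ⊢
          obtain ⟨hDp2, hDb2, heq⟩ :=
            A.assoc b (A.pw (f b) b) s₂ (A.D_comm _ _ hDpb) hDs₂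
          have hs₀v : A.le (A.oplus (A.pw (f b) b) s₂) v := by
            by_cases hfb : f b = 0
            · rw [hfb, pw_zero, A.zero_oplus]
              exact hvSup.2.1 _ (hlift (l.erase b)
                (fun e he => by rw [← hgne e (herase_ne e he)]; exact h0 e (List.mem_of_mem_erase he))
                (hnd.erase b) s₂ hs₂)
            · have hnd' : (b :: l.erase b).Nodup := List.nodup_cons.mpr ⟨hbne, hnd.erase b⟩
              have h0' : ∀ e ∈ b :: l.erase b, f e ≠ 0 := by
                intro e he
                rcases List.mem_cons.mp he with rfl | he
                · exact hfb
                · rw [← hgne e (herase_ne e he)]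
                  exact h0 e (List.mem_of_mem_erase he)
              refine hvSup.2.1 _ (hlift (b :: l.erase b) h0' hnd' _ ?_)
              rw [List.map_cons]
              exact SumDef.cons hs₂ hDp2
          rw [heq]
          have hcomm : A.oplus b (A.oplus (A.pw (f b) b) s₂)
              = A.oplus (A.oplus (A.pw (f b) b) s₂) b := A.oplus_comm _ _ hDb2
          rw [hcomm]
          have hstep1 := (A.oplus_le_left hs₀v hDvb).2
          have hstep2 := (A.oplus_le_right hbe₀ hDe₀).2
          rw [hve₀] at hstep2
          exact A.le_trans hstep1 (A.le_trans hstep2 (A.jn_le hL (hz t ht) (hvle z hz)))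
        · have hmap2 : l.map (fun e => A.pw (g e) e)
              = l.map (fun e => A.pw (f e) e) :=
            List.map_congr_left fun e he =>
              by rw [hgne e (fun h => hbl (h ▸ he))]
          rw [hmap2] at hs
          exact hfS.2.2 l hnd
            (fun e he => by rw [← hgne e (fun h => hbl (h ▸ he))]; exact h0 e he)
            s hs z hz
    have hfg : f ≤ g := by
      intro e
      by_cases heb : e = b
      · rw [heb, hgb]
        exact Nat.le_succ _
      · rw [hgne e heb]
    have hgf := hfmax.2 hgS hfg
    have hcontra : g b ≤ f b := hgf b
    rw [hgb] at hcontra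
    omega
  exact ⟨v, Set.mem_univ v, hUB, fun z _ hz => hvle z hz⟩

end EffectAlgebra
/-- Every sharply orthocomplete Archimedean atomic lattice effect algebra is
complete. -/
theorem stmt18 {E : Type u} (A : EffectAlgebra E) (hL : A.LatticeOrdered)
    (hArch : A.IsArchimedean) (hAtomic : A.Atomic)
    (hSO : A.SharplyOrthocomplete) :
    A.Complete := by
  intro S
  constructor
  · exact A.exists_sup hL hArch hAtomic hSO S
  · obtain ⟨v, hv⟩ := A.exists_sup hL hArch hAtomic hSO {z | A.IsLB S z}
    refine ⟨v, Set.mem_univ v, ?_, ?_⟩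
    · intro s hs
      refine hv.2.2 s (Set.mem_univ s) ?_
      intro z hz
      exact hz s hs
    · intro z _ hz
      exact hv.2.1 z hz
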